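/- For each fixed z > 0 there exists a constant C > 0 and d_0 such that for d > d_0, 1 − cos^{2d}(z/√d) ≥ C (1 − exp(−2αz²)) for the α of the domination lemma; moreover for z in a bounded interval (0, z_0], 1 − cos^{2d}(z/√d) − d cos^{2d−2}(z/√d) sin²(z/√d) ≤ C z⁴ uniformly in d. -/

import Mathlib

open Real

private lemma aux_poly (u : ℝ) (hu0 : 0 ≤ u) (hu1 : u ≤ 1) :
    ∀ d : ℕ, 1 ≤ d → 1 - u ^ d - d * u ^ (d - 1) * (1 - u) ≤ (d : ℝ) ^ 2 / 2 * (1 - u) ^ 2 := by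
  intro d hd
  induction d, hd using Nat.le_induction with
  | base => simp; nlinarith
  | succ d hd ih =>
    have hp0 : 0 ≤ u ^ (d - 1) := pow_nonneg hu0 _
    have hp1 : u ^ (d - 1) ≤ 1 := pow_le_one₀ hu0 hu1
    have hud : u ^ d = u ^ (d - 1) * u := by
      rw [← pow_succ]; congr 1; omega
    have hud1 : u ^ (d + 1) = u ^ (d - 1) * u * u := by
      rw [← pow_succ, ← pow_succ]; congr 1; omega
    have h1 : (1 : ℝ) ≤ (d : ℝ) := by exact_mod_cast hd
    have hs : ((d + 1 : ℕ) : ℝ) = (d : ℝ) + 1 := by push_cast; ring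
    rw [hs, hud1]
    have hstep : (d : ℝ) * u ^ (d - 1) * (1 - u) ^ 2 ≤ (d : ℝ) * (1 - u) ^ 2 := by
      nlinarith [mul_nonneg (mul_nonneg (Nat.cast_nonneg d : (0:ℝ) ≤ d)
        (sub_nonneg.mpr hp1)) (sq_nonneg (1 - u))]
    have hsimp : (d + 1 : ℕ) - 1 = d := by omega
    rw [hsimp, hud]
    rw [hud] at ih
    nlinarith [sq_nonneg (1 - u), ih]

theorem kostlan_denominator_bounds :
    (∃ α : ℝ, 0 < α ∧ α ≤ 1 / 2 ∧ ∀ z : ℝ, 0 < z →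
      ∃ C : ℝ, 0 < C ∧ ∃ d₀ : ℕ, ∀ d : ℕ, d₀ < d →
        C * (1 - Real.exp (-2 * α * z ^ 2)) ≤ 1 - Real.cos (z / Real.sqrt d) ^ (2 * d)) ∧
    (∀ z₀ : ℝ, 0 < z₀ → ∃ C : ℝ, 0 < C ∧ ∀ d : ℕ, 1 ≤ d → ∀ z ∈ Set.Ioc (0 : ℝ) z₀,
      1 - Real.cos (z / Real.sqrt d) ^ (2 * d)
          - d * Real.cos (z / Real.sqrt d) ^ (2 * d - 2) * Real.sin (z / Real.sqrt d) ^ 2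
        ≤ C * z ^ 4) := by
  constructor
  · -- lower bound part, α = 1/2
    refine ⟨1 / 2, by norm_num, le_refl _, fun z hz => ?_⟩
    set κ : ℝ := 2 / π ^ 2 with hκdef
    have hκpos : 0 < κ := by positivity
    have hκlt : κ ≤ 1 := by
      rw [hκdef, div_le_one (by positivity)]
      nlinarith [pi_gt_three]
    have hnum : 0 < 1 - Real.exp (-(κ * z ^ 2)) := by
      have : Real.exp (-(κ * z ^ 2)) < 1 := by
        rw [Real.exp_lt_one_iff]; nlinarith [mul_pos hκpos (pow_pos hz 2)]
      linarith
    have hden : 0 < 1 - Real.exp (-2 * (1 / 2) * z ^ 2) := by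
      have : Real.exp (-2 * (1 / 2) * z ^ 2) < 1 := by
        rw [Real.exp_lt_one_iff]; nlinarith
      linarith
    refine ⟨(1 - Real.exp (-(κ * z ^ 2))) / (1 - Real.exp (-2 * (1 / 2) * z ^ 2)),
      div_pos hnum hden, ⟨⌈z ^ 2⌉₊, fun d hd => ?_⟩⟩
    rw [div_mul_cancel₀ _ (ne_of_gt hden)]
    -- set x = z / √d ∈ (0, 1)
    have hdpos : 0 < (d : ℝ) := by
      have : 0 < d := lt_of_le_of_lt (Nat.zero_le _) hd
      exact_mod_cast this
    have hzd : z ^ 2 < (d : ℝ) := by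
      calc z ^ 2 ≤ (⌈z ^ 2⌉₊ : ℝ) := Nat.le_ceil _
        _ < d := by exact_mod_cast hd
    have hsq : Real.sqrt d > 0 := Real.sqrt_pos.mpr hdpos
    set x := z / Real.sqrt d with hxdef
    have hx0 : 0 < x := div_pos hz hsq
    have hx1 : x < 1 := by
      rw [hxdef, div_lt_one hsq]
      have := Real.sqrt_lt_sqrt (sq_nonneg z) hzd
      rwa [Real.sqrt_sq hz.le] at this
    have hx2 : x ^ 2 = z ^ 2 / d := by
      rw [hxdef, div_pow, Real.sq_sqrt hdpos.le]
    -- cos x ≤ 1 - κ x², with cos x ≥ 0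
    have hcos_le : Real.cos x ≤ 1 - κ * x ^ 2 := by
      have habs : |x| ≤ π := by
        rw [abs_of_pos hx0]; linarith [pi_gt_three]
      simpa [hκdef, mul_comm] using Real.cos_le_one_sub_mul_cos_sq habs
    have hcos_nn : 0 ≤ Real.cos x :=
      Real.cos_nonneg_of_mem_Icc ⟨by linarith [pi_gt_three], by linarith [pi_gt_three]⟩
    have hb0 : 0 ≤ 1 - κ * x ^ 2 := le_trans hcos_nn hcos_le
    have hb1 : 1 - κ * x ^ 2 ≤ 1 := by nlinarith
    -- cos² x ≤ 1 - κ x²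
    have hcsq : Real.cos x ^ 2 ≤ 1 - κ * x ^ 2 := by nlinarith
    -- (cos² x)^d ≤ exp(-κ z²)
    have hexp : 1 - κ * x ^ 2 ≤ Real.exp (-(κ * x ^ 2)) := by
      have := Real.add_one_le_exp (-(κ * x ^ 2))
      linarith
    have hpow : Real.cos x ^ (2 * d) ≤ Real.exp (-(κ * z ^ 2)) := by
      have h1 : Real.cos x ^ (2 * d) = (Real.cos x ^ 2) ^ d := by
        rw [← pow_mul]
      rw [h1]
      calc (Real.cos x ^ 2) ^ d ≤ (Real.exp (-(κ * x ^ 2))) ^ d :=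
            pow_le_pow_left₀ (sq_nonneg _) (le_trans hcsq hexp) d
        _ = Real.exp (-(κ * x ^ 2) * d) := by rw [← Real.exp_nat_mul]; ring_nf
        _ = Real.exp (-(κ * z ^ 2)) := by
            congr 1
            rw [hx2]; field_simp
    linarith
  · -- quartic upper bound part, C = 1/2
    intro z₀ hz₀
    refine ⟨1 / 2, by norm_num, fun d hd z hz => ?_⟩
    obtain ⟨hz0, hzz0⟩ := hz
    have hdpos : 0 < (d : ℝ) := by exact_mod_cast lt_of_lt_of_le Nat.one_pos hd
    set x := z / Real.sqrt d with hxdef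
    set u := Real.cos x ^ 2 with hudef
    have hu0 : 0 ≤ u := sq_nonneg _
    have hu1 : u ≤ 1 := by
      rw [hudef]; exact Real.cos_sq_le_one x
    have key := aux_poly u hu0 hu1 d hd
    have h2d : Real.cos x ^ (2 * d) = u ^ d := by rw [hudef, ← pow_mul]
    have h2d2 : Real.cos x ^ (2 * d - 2) = u ^ (d - 1) := by
      rw [hudef, ← pow_mul]; congr 1; omega
    have hsin : Real.sin x ^ 2 = 1 - u := by
      rw [hudef, Real.sin_sq]
    rw [h2d, h2d2, hsin]
    -- 1 - u = sin² x ≤ x² = z²/d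
    have hx2 : x ^ 2 = z ^ 2 / d := by
      rw [hxdef, div_pow, Real.sq_sqrt hdpos.le]
    have hsinle : 1 - u ≤ z ^ 2 / d := by
      rw [← hsin, ← hx2]; exact Real.sin_sq_le_sq
    have hfin : ((d : ℝ)) ^ 2 / 2 * (1 - u) ^ 2 ≤ 1 / 2 * z ^ 4 := by
      have h1u : 0 ≤ 1 - u := by linarith
      have hsq : (1 - u) ^ 2 ≤ (z ^ 2 / d) ^ 2 := by
        apply sq_le_sq' <;> nlinarith [sq_nonneg z]
      calc ((d : ℝ)) ^ 2 / 2 * (1 - u) ^ 2 ≤ ((d : ℝ)) ^ 2 / 2 * (z ^ 2 / d) ^ 2 := by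
            apply mul_le_mul_of_nonneg_left hsq (by positivity)
        _ = 1 / 2 * z ^ 4 := by field_simp
    linarith
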